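/- Let S be a topological semigroup acting non-expansively on a metric space (X,d) such that the action has a fixed point z∈X. Then there exists a real normed space V, equipped with a linear non-expansive action of S, and an equivariant isometric embedding of (X,d) into V sending z to 0. -/

import Mathlib

open Bornology Metric Set

universe u v

/-- A non-expansive (jointly continuous) action of a topological semigroup `S`
on a metric space `X`. -/
structure NonexpAction (S : Type*) (X : Type*) [Semigroup S] [TopologicalSpace S]
    [MetricSpace X] where
  act : S → X → X
  mul_act : ∀ s t x, act (s * t) x = act s (act t x)
  nonexp : ∀ s x y, dist (act s x) (act s y) ≤ dist x y
  cont : Continuous fun p : S × X => act p.1 p.2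

/-- A linear non-expansive (jointly continuous) action of a topological semigroup `S`
on a real normed space `V`. -/
structure LinNonexpAction (S : Type*) (V : Type*) [Semigroup S] [TopologicalSpace S]
    [NormedAddCommGroup V] [NormedSpace ℝ V] where
  act : S → V → V
  mul_act : ∀ s t x, act (s * t) x = act s (act t x)
  linear : ∀ s, IsLinearMap ℝ (act s)
  nonexp : ∀ s x, ‖act s x‖ ≤ ‖x‖
  cont : Continuous fun p : S × V => act p.1 p.2

/-! ### Auxiliary construction -/

namespace Stmt16Aux

/-- Index type: `Option S × X`, with discrete topology (a `def`, so no instances leak). -/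
def Idx (S : Type u) (X : Type v) : Type max u v := Option S × X

instance (S : Type u) (X : Type v) : TopologicalSpace (Idx S X) := ⊥
instance (S : Type u) (X : Type v) : DiscreteTopology (Idx S X) := ⟨rfl⟩

variable {S : Type u} {X : Type v} [Semigroup S] [TopologicalSpace S] [ContinuousMul S]
  [MetricSpace X]

/-- Extension of the action to `Option S` (with `none` acting as the identity). -/
def act1 (π : NonexpAction S X) : Option S → X → X
  | none, x => x
  | some s, x => π.act s x

/-- Right translation on `Option S` by `s : S`. -/
def mOp : Option S → S → Option S
  | none, s => some s
  | some t, s => some (t * s)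

lemma act1_mOp (π : NonexpAction S X) (t : Option S) (s : S) (x : X) :
    act1 π (mOp t s) x = act1 π t (π.act s x) := by
  cases t <;> simp [act1, mOp, π.mul_act]

lemma mOp_mOp (t : Option S) (s s' : S) : mOp (mOp t s') s = mOp t (s' * s) := by
  cases t <;> simp [mOp, mul_assoc]

lemma act1_nonexp (π : NonexpAction S X) (t : Option S) (x y : X) :
    dist (act1 π t x) (act1 π t y) ≤ dist x y := by
  cases t with
  | none => simp [act1]
  | some s => exact π.nonexp s x y

lemma act1_fix (π : NonexpAction S X) (z : X) (hz : ∀ s, π.act s z = z) (t : Option S) :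
    act1 π t z = z := by
  cases t with
  | none => rfl
  | some s => exact hz s

/-- The ambient space: bounded functions on `Idx S X`. -/
abbrev W (S : Type u) (X : Type v) [Semigroup S] [TopologicalSpace S] [MetricSpace X] :
    Type max u v := BoundedContinuousFunction (Idx S X) ℝ

/-- The Kuratowski-style embedding. -/
def Fmap (π : NonexpAction S X) (z : X) (hz : ∀ s, π.act s z = z) (x : X) : W S X :=
  BoundedContinuousFunction.ofNormedAddCommGroupDiscrete
    (fun q : Idx S X => dist (act1 π q.1 x) q.2 - dist z q.2) (dist x z)
    (by
      intro q
      rw [Real.norm_eq_abs]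
      calc |dist (act1 π q.1 x) q.2 - dist z q.2| ≤ dist (act1 π q.1 x) z :=
            abs_dist_sub_le _ _ _
        _ ≤ dist x z := by
            conv_lhs => rw [show z = act1 π q.1 z from (act1_fix π z hz q.1).symm]
            exact act1_nonexp π q.1 x z)

lemma Fmap_apply (π : NonexpAction S X) (z : X) (hz : ∀ s, π.act s z = z) (x : X)
    (q : Idx S X) : Fmap π z hz x q = dist (act1 π q.1 x) q.2 - dist z q.2 := rfl

/-- The linear action on the ambient space: precomposition with right translation. -/
def τ (π : NonexpAction S X) (s : S) (g : W S X) : W S X :=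
  g.compContinuous ⟨fun q : Idx S X => ((mOp q.1 s, q.2) : Idx S X),
    continuous_of_discreteTopology⟩

lemma τ_apply (π : NonexpAction S X) (s : S) (g : W S X) (q : Idx S X) :
    τ π s g q = g (mOp q.1 s, q.2) := rfl

lemma τ_Fmap (π : NonexpAction S X) (z : X) (hz : ∀ s, π.act s z = z) (s : S) (x : X) :
    τ π s (Fmap π z hz x) = Fmap π z hz (π.act s x) := by
  ext q
  simp only [τ_apply, Fmap_apply, act1_mOp]
  exact congrArg (fun w => dist w q.2 - dist z q.2) (act1_mOp π q.1 s x)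

lemma τ_add (π : NonexpAction S X) (s : S) (g h : W S X) :
    τ π s (g + h) = τ π s g + τ π s h := rfl

lemma τ_smul (π : NonexpAction S X) (s : S) (c : ℝ) (g : W S X) :
    τ π s (c • g) = c • τ π s g := rfl

lemma τ_zero (π : NonexpAction S X) (s : S) : τ π s (0 : W S X) = 0 := rfl

lemma τ_norm_le (π : NonexpAction S X) (s : S) (g : W S X) : ‖τ π s g‖ ≤ ‖g‖ :=
  BoundedContinuousFunction.norm_compContinuous_le _ _

lemma τ_τ (π : NonexpAction S X) (s s' : S) (g : W S X) :
    τ π s' (τ π s g) = τ π (s' * s) g := by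
  ext q
  simp only [τ_apply, mOp_mOp]
  exact congrArg (fun t => g (t, q.2)) (mOp_mOp q.1 s s')

lemma Fmap_isometry (π : NonexpAction S X) (z : X) (hz : ∀ s, π.act s z = z) :
    Isometry (Fmap π z hz) := by
  refine Isometry.of_dist_eq fun x y => le_antisymm ?_ ?_
  · rw [dist_eq_norm]
    refine (BoundedContinuousFunction.norm_le dist_nonneg).2 fun q => ?_
    simp only [BoundedContinuousFunction.coe_sub, Pi.sub_apply, Fmap_apply, Real.norm_eq_abs]
    have : dist (act1 π q.1 x) q.2 - dist z q.2 - (dist (act1 π q.1 y) q.2 - dist z q.2)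
        = dist (act1 π q.1 x) q.2 - dist (act1 π q.1 y) q.2 := by ring
    rw [this]
    exact le_trans (abs_dist_sub_le _ _ _) (act1_nonexp π q.1 x y)
  · have h := (Fmap π z hz x - Fmap π z hz y).norm_coe_le_norm ((none, y) : Idx S X)
    rw [dist_eq_norm]
    refine le_trans ?_ h
    simp only [BoundedContinuousFunction.coe_sub, Pi.sub_apply, Fmap_apply, act1,
      Real.norm_eq_abs]
    show dist x y ≤ |(dist x y - dist z y) - (dist y y - dist z y)|
    rw [dist_self]
    rw [show dist x y - dist z y - (0 - dist z y) = dist x y by ring]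
    exact le_abs_self _

/-- The subspace on which the action is strongly continuous. -/
def Vsub (π : NonexpAction S X) : Submodule ℝ (W S X) where
  carrier := {g | Continuous fun s : S => τ π s g}
  add_mem' := by
    intro a b ha hb
    have : (fun s : S => τ π s (a + b)) = fun s => τ π s a + τ π s b := by
      funext s; exact τ_add π s a b
    show Continuous fun s : S => τ π s (a + b)
    rw [this]
    exact ha.add hb
  zero_mem' := by
    have : (fun s : S => τ π s (0 : W S X)) = fun _ => (0 : W S X) := by
      funext s; exact τ_zero π s
    simp only [Set.mem_setOf_eq, this]
    exact continuous_const
  smul_mem' := by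
    intro c a ha
    have : (fun s : S => τ π s (c • a)) = fun s => c • τ π s a := by
      funext s; exact τ_smul π s c a
    show Continuous fun s : S => τ π s (c • a)
    rw [this]
    exact ha.const_smul c

lemma Fmap_mem (π : NonexpAction S X) (z : X) (hz : ∀ s, π.act s z = z) (x : X) :
    Fmap π z hz x ∈ Vsub π := by
  show Continuous fun s : S => τ π s (Fmap π z hz x)
  have : (fun s : S => τ π s (Fmap π z hz x)) = fun s => Fmap π z hz (π.act s x) := by
    funext s; exact τ_Fmap π z hz s x
  rw [this]
  exact (Fmap_isometry π z hz).continuous.comp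
    (π.cont.comp (by fun_prop : Continuous fun s : S => (s, x)) : Continuous fun s : S => π.act s x)

lemma τ_mem (π : NonexpAction S X) (s : S) {g : W S X} (hg : g ∈ Vsub π) :
    τ π s g ∈ Vsub π := by
  show Continuous fun s' : S => τ π s' (τ π s g)
  have : (fun s' : S => τ π s' (τ π s g)) = (fun u : S => τ π u g) ∘ fun s' : S => s' * s := by
    funext s'; exact τ_τ π s s' g
  rw [this]
  exact (hg : Continuous fun s : S => τ π s g).comp (continuous_mul_right s)

end Stmt16Aux

open Stmt16Aux in
/-- A non-expansive semigroup action on a metric space possessing a fixed point `z` embeds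
equivariantly and isometrically into a real normed space carrying a linear non-expansive
`S`-action, with `z` sent to `0`. -/
theorem stmt_16 {S : Type u} {X : Type v} [Semigroup S] [TopologicalSpace S] [ContinuousMul S]
    [MetricSpace X] (π : NonexpAction S X) (z : X) (hz : ∀ s, π.act s z = z) :
    ∃ (V : Type (max u v)) (_ : NormedAddCommGroup V) (_ : NormedSpace ℝ V)
      (σ : LinNonexpAction S V) (f : X → V),
      Isometry f ∧ (∀ s x, f (π.act s x) = σ.act s (f x)) ∧ f z = 0 := by
  refine ⟨Vsub π, inferInstance, inferInstance, ?_, ?_, ?_, ?_, ?_⟩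
  · exact
      { act := fun s v => ⟨τ π s v.1, τ_mem π s v.2⟩
        mul_act := by
          intro s t v
          apply Subtype.ext
          exact (τ_τ π t s v.1).symm
        linear := fun s =>
          ⟨fun a b => Subtype.ext (τ_add π s a.1 b.1),
           fun c a => Subtype.ext (τ_smul π s c a.1)⟩
        nonexp := fun s v => τ_norm_le π s v.1
        cont := by
          rw [continuous_induced_rng]
          show Continuous fun p : S × Vsub π => τ π p.1 (p.2 : W S X)
          rw [continuous_iff_continuousAt]
          rintro ⟨s₀, g₀⟩
          have key : ∀ p : S × Vsub π,
              dist (τ π p.1 (p.2 : W S X)) (τ π s₀ (g₀ : W S X)) ≤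
                dist (p.2 : W S X) (g₀ : W S X) + dist (τ π p.1 (g₀ : W S X)) (τ π s₀ (g₀ : W S X)) := by
            rintro ⟨s, g⟩
            refine le_trans (dist_triangle _ (τ π s (g₀ : W S X)) _) ?_
            have h1 : dist (τ π s (g : W S X)) (τ π s (g₀ : W S X)) ≤
                dist (g : W S X) (g₀ : W S X) := by
              rw [dist_eq_norm, dist_eq_norm]
              have : τ π s (g : W S X) - τ π s (g₀ : W S X) = τ π s ((g : W S X) - (g₀ : W S X)) := rfl
              rw [this]
              exact τ_norm_le π s _
            linarith
          rw [Metric.continuousAt_iff']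
          intro ε hε
          have hcont : ContinuousAt (fun p : S × Vsub π =>
              dist (p.2 : W S X) (g₀ : W S X) + dist (τ π p.1 (g₀ : W S X)) (τ π s₀ (g₀ : W S X)))
              (s₀, g₀) := by
            refine ContinuousAt.add ?_ ?_
            · exact ((continuous_subtype_val.comp continuous_snd).dist continuous_const).continuousAt
            · have hg₀ : Continuous fun s : S => τ π s (g₀ : W S X) := g₀.2
              exact ((hg₀.comp continuous_fst).dist continuous_const).continuousAt
          have ht : Filter.Tendsto (fun p : S × Vsub π =>
              dist (p.2 : W S X) (g₀ : W S X) + dist (τ π p.1 (g₀ : W S X)) (τ π s₀ (g₀ : W S X)))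
              (nhds (s₀, g₀)) (nhds 0) := by simpa using hcont.tendsto
          have hev := ht (Metric.ball_mem_nhds (0 : ℝ) hε)
          refine Filter.mem_of_superset hev ?_
          rintro ⟨s, g⟩ hp
          show dist (τ π s (g : W S X)) (τ π s₀ (g₀ : W S X)) < ε
          simp only [Set.mem_preimage, Metric.mem_ball, Real.dist_eq, sub_zero] at hp
          have hb := key (s, g)
          calc dist (τ π s (g : W S X)) (τ π s₀ (g₀ : W S X)) ≤ _ := hb
            _ ≤ |dist (g : W S X) (g₀ : W S X) + dist (τ π s (g₀ : W S X)) (τ π s₀ (g₀ : W S X))| :=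
                le_abs_self _
            _ < ε := hp }
  · exact fun x => ⟨Fmap π z hz x, Fmap_mem π z hz x⟩
  · exact Isometry.of_dist_eq fun x y => (Fmap_isometry π z hz).dist_eq x y
  · intro s x
    exact Subtype.ext (τ_Fmap π z hz s x).symm
  · apply Subtype.ext
    show Fmap π z hz z = 0
    ext q
    simp [Fmap_apply, act1_fix π z hz]
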